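/- Suppose p, e, s : (0,∞)² → ℝ are C¹ functions satisfying Gibbs' equation ϑ ∂s/∂ϱ = ∂e/∂ϱ − p/ϱ² and ϑ ∂s/∂ϑ = ∂e/∂ϑ. If additionally p(ϱ,ϑ) = (2/3) ϱ e(ϱ,ϑ), then there exists (locally) a C¹ function P such that p(ϱ,ϑ) = ϑ^{5/2} P(ϱ/ϑ^{3/2}) and e(ϱ,ϑ) = (3/2)(ϑ^{5/2}/ϱ) P(ϱ/ϑ^{3/2}). -/

import Mathlib

open Set

/-- Partial derivatives + chain rule package for a C¹ function on the quadrant. -/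
lemma key_partial (f : ℝ → ℝ → ℝ)
    (hf : ContDiffOn ℝ 1 (fun q : ℝ × ℝ => f q.1 q.2) (Ioi 0 ×ˢ Ioi 0))
    {ϱ ϑ : ℝ} (hϱ : 0 < ϱ) (hϑ : 0 < ϑ) :
    ∃ a b : ℝ, HasDerivAt (fun x => f x ϑ) a ϱ ∧ HasDerivAt (fun y => f ϱ y) b ϑ ∧
      ∀ (c d : ℝ) (γ₁ γ₂ : ℝ → ℝ) (t : ℝ), HasDerivAt γ₁ c t → HasDerivAt γ₂ d t →
        γ₁ t = ϱ → γ₂ t = ϑ →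
        HasDerivAt (fun u => f (γ₁ u) (γ₂ u)) (c * a + d * b) t := by
  have hopen : IsOpen (Ioi (0:ℝ) ×ˢ Ioi (0:ℝ)) := isOpen_Ioi.prod isOpen_Ioi
  have hmem : ((ϱ, ϑ) : ℝ × ℝ) ∈ Ioi (0:ℝ) ×ˢ Ioi (0:ℝ) := ⟨hϱ, hϑ⟩
  have hdiff : DifferentiableAt ℝ (fun q : ℝ × ℝ => f q.1 q.2) (ϱ, ϑ) :=
    (hf.differentiableOn one_ne_zero).differentiableAt (hopen.mem_nhds hmem)
  have hF := hdiff.hasFDerivAt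
  set L := fderiv ℝ (fun q : ℝ × ℝ => f q.1 q.2) (ϱ, ϑ) with hL
  refine ⟨L (1, 0), L (0, 1), ?_, ?_, ?_⟩
  · have h1 : HasDerivAt (fun x : ℝ => ((x, ϑ) : ℝ × ℝ)) (1, 0) ϱ :=
      (hasDerivAt_id ϱ).prodMk (hasDerivAt_const ϱ ϑ)
    simpa [Function.comp_def] using hF.comp_hasDerivAt ϱ h1
  · have h1 : HasDerivAt (fun y : ℝ => ((ϱ, y) : ℝ × ℝ)) (0, 1) ϑ :=
      (hasDerivAt_const ϑ ϱ).prodMk (hasDerivAt_id ϑ)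
    simpa [Function.comp_def] using hF.comp_hasDerivAt ϑ h1
  · intro c d γ₁ γ₂ t h1 h2 e1 e2
    have hcurve : HasDerivAt (fun u => ((γ₁ u, γ₂ u) : ℝ × ℝ)) (c, d) t := h1.prodMk h2
    have hF' : HasFDerivAt (fun q : ℝ × ℝ => f q.1 q.2) L (γ₁ t, γ₂ t) := by
      rw [e1, e2]; exact hF
    have := hF'.comp_hasDerivAt t hcurve
    have hlin : L (c, d) = c * L (1, 0) + d * L (0, 1) := by
      have : ((c, d) : ℝ × ℝ) = c • ((1:ℝ), (0:ℝ)) + d • ((0:ℝ), (1:ℝ)) := by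
        simp [Prod.ext_iff]
      rw [this, map_add, map_smul, map_smul, smul_eq_mul, smul_eq_mul]
    rw [← hlin]
    simpa [Function.comp_def] using this

/-- zero derivative on Ioi 0 implies constant there -/
lemma const_of_deriv_zero_Ioi {F : ℝ → ℝ} (h : ∀ x ∈ Ioi (0:ℝ), HasDerivAt F 0 x)
    {a b : ℝ} (ha : 0 < a) (hb : 0 < b) : F a = F b := by
  wlog hab : a ≤ b generalizing a b
  · exact (this hb ha (le_of_not_ge hab)).symm
  have hcont : ContinuousOn F (Icc a b) := fun x hx =>
    ((h x (lt_of_lt_of_le ha hx.1)).continuousAt).continuousWithinAt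
  have := constant_of_has_deriv_right_zero hcont
    (fun x hx => ((h x (lt_of_lt_of_le ha hx.1)).hasDerivWithinAt))
  exact (this b (right_mem_Icc.2 hab)).symm

lemma star_lemma (p e s : ℝ → ℝ → ℝ)
    (he : ContDiffOn ℝ 1 (fun q : ℝ × ℝ => e q.1 q.2) (Set.Ioi 0 ×ˢ Set.Ioi 0))
    (hs : ContDiffOn ℝ 1 (fun q : ℝ × ℝ => s q.1 q.2) (Set.Ioi 0 ×ˢ Set.Ioi 0))
    (hGibbs1 : ∀ ϱ ϑ : ℝ, 0 < ϱ → 0 < ϑ →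
      ϑ * deriv (fun x => s x ϑ) ϱ = deriv (fun x => e x ϑ) ϱ - p ϱ ϑ / ϱ ^ 2)
    (hGibbs2 : ∀ ϱ ϑ : ℝ, 0 < ϱ → 0 < ϑ →
      ϑ * deriv (fun y => s ϱ y) ϑ = deriv (fun y => e ϱ y) ϑ)
    (hmono : ∀ ϱ ϑ : ℝ, 0 < ϱ → 0 < ϑ → p ϱ ϑ = (2/3) * ϱ * e ϱ ϑ) :
    ∀ ϱ ϑ l : ℝ, 0 < ϱ → 0 < ϑ → 0 < l →
      l^2*ϑ * s (l^3*ϱ) (l^2*ϑ) - e (l^3*ϱ) (l^2*ϑ) = l^2 * (ϑ * s ϱ ϑ - e ϱ ϑ) := by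
  intro ϱ ϑ l hϱ hϑ hl
  set F : ℝ → ℝ := fun u => ϑ * s (u^3*ϱ) (u^2*ϑ) - e (u^3*ϱ) (u^2*ϑ) / u^2 with hF
  have hF0 : ∀ u ∈ Ioi (0:ℝ), HasDerivAt F 0 u := by
    intro u hu
    have hu' : (0:ℝ) < u := hu
    have hϱ' : 0 < u^3*ϱ := by positivity
    have hϑ' : 0 < u^2*ϑ := by positivity
    obtain ⟨ea, eb, hea, heb, hec⟩ := key_partial e he hϱ' hϑ'
    obtain ⟨sa, sb, hsa, hsb, hsc⟩ := key_partial s hs hϱ' hϑ'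
    have g1 : (u^2*ϑ) * sa = ea - p (u^3*ϱ) (u^2*ϑ) / (u^3*ϱ)^2 := by
      have := hGibbs1 (u^3*ϱ) (u^2*ϑ) hϱ' hϑ'
      rwa [hsa.deriv, hea.deriv] at this
    have g2 : (u^2*ϑ) * sb = eb := by
      have := hGibbs2 (u^3*ϱ) (u^2*ϑ) hϱ' hϑ'
      rwa [hsb.deriv, heb.deriv] at this
    have hm := hmono (u^3*ϱ) (u^2*ϑ) hϱ' hϑ'
    have hγ1 : HasDerivAt (fun v : ℝ => v^3*ϱ) (3*u^2*ϱ) u := by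
      simpa using (hasDerivAt_pow 3 u).mul_const ϱ
    have hγ2 : HasDerivAt (fun v : ℝ => v^2*ϑ) (2*u*ϑ) u := by
      simpa using (hasDerivAt_pow 2 u).mul_const ϑ
    have hS : HasDerivAt (fun v => s (v^3*ϱ) (v^2*ϑ)) ((3*u^2*ϱ) * sa + (2*u*ϑ) * sb) u :=
      hsc _ _ _ _ u hγ1 hγ2 rfl rfl
    have hE : HasDerivAt (fun v => e (v^3*ϱ) (v^2*ϑ)) ((3*u^2*ϱ) * ea + (2*u*ϑ) * eb) u :=
      hec _ _ _ _ u hγ1 hγ2 rfl rfl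
    have hpow : HasDerivAt (fun v : ℝ => v^2) (2*u) u := by simpa using hasDerivAt_pow 2 u
    have hD : HasDerivAt F (ϑ * ((3*u^2*ϱ) * sa + (2*u*ϑ) * sb) -
        (((3*u^2*ϱ) * ea + (2*u*ϑ) * eb) * u^2 - e (u^3*ϱ) (u^2*ϑ) * (2*u)) / (u^2)^2) u :=
      (hS.const_mul ϑ).sub (hE.div hpow (by positivity))
    convert hD using 1
    have hne1 : (u:ℝ) ≠ 0 := hu'.ne'
    have hne2 : (u^3*ϱ) ≠ 0 := hϱ'.ne'
    have hne3 : (u^2*ϑ) ≠ 0 := hϑ'.ne'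
    rw [hm] at g1
    field_simp at g1
    have key : (u^2*ϱ) * (ϑ * (3*u^2*ϱ*sa + 2*u*ϑ*sb) * (u^2)^2) =
        (u^2*ϱ) * ((3*u^2*ϱ*ea + 2*u*ϑ*eb) * u^2 - e (u^3*ϱ) (u^2*ϑ) * (2*u)) := by
      linear_combination (u^3*ϱ)*g1 + (2*u^5*ϱ*ϑ)*g2
    have key2 := mul_left_cancel₀ (show (u^2*ϱ) ≠ 0 by positivity) key
    rw [eq_sub_iff_add_eq, zero_add, div_eq_iff (by positivity)]
    linarith [key2]
  have h1 := const_of_deriv_zero_Ioi hF0 hl one_pos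
  have hl2 : (0:ℝ) < l^2 := by positivity
  simp only [hF, one_pow, one_mul] at h1
  field_simp at h1
  rw [mul_comm ϑ (l^2)] at h1
  linarith [h1]

lemma scale_lemma (p e s : ℝ → ℝ → ℝ)
    (he : ContDiffOn ℝ 1 (fun q : ℝ × ℝ => e q.1 q.2) (Set.Ioi 0 ×ˢ Set.Ioi 0))
    (hs : ContDiffOn ℝ 1 (fun q : ℝ × ℝ => s q.1 q.2) (Set.Ioi 0 ×ˢ Set.Ioi 0))
    (hGibbs1 : ∀ ϱ ϑ : ℝ, 0 < ϱ → 0 < ϑ →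
      ϑ * deriv (fun x => s x ϑ) ϱ = deriv (fun x => e x ϑ) ϱ - p ϱ ϑ / ϱ ^ 2)
    (hGibbs2 : ∀ ϱ ϑ : ℝ, 0 < ϱ → 0 < ϑ →
      ϑ * deriv (fun y => s ϱ y) ϑ = deriv (fun y => e ϱ y) ϑ)
    (hmono : ∀ ϱ ϑ : ℝ, 0 < ϱ → 0 < ϑ → p ϱ ϑ = (2/3) * ϱ * e ϱ ϑ) :
    ∀ ϱ ϑ l : ℝ, 0 < ϱ → 0 < ϑ → 0 < l →
      e (l^3*ϱ) (l^2*ϑ) = l^2 * e ϱ ϑ := by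
  have star := star_lemma p e s he hs hGibbs1 hGibbs2 hmono
  intro ϱ ϑ l hϱ hϑ hl
  have hϱ' : 0 < l^3*ϱ := by positivity
  have hϑ' : 0 < l^2*ϑ := by positivity
  obtain ⟨ea', eb', hea', heb', hec'⟩ := key_partial e he hϱ' hϑ'
  obtain ⟨sa', sb', hsa', hsb', hsc'⟩ := key_partial s hs hϱ' hϑ'
  obtain ⟨ea, eb, hea, heb, hec⟩ := key_partial e he hϱ hϑ
  obtain ⟨sa, sb, hsa, hsb, hsc⟩ := key_partial s hs hϱ hϑ
  have g2' : (l^2*ϑ) * sb' = eb' := by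
    have := hGibbs2 (l^3*ϱ) (l^2*ϑ) hϱ' hϑ'
    rwa [hsb'.deriv, heb'.deriv] at this
  have g2 : ϑ * sb = eb := by
    have := hGibbs2 ϱ ϑ hϱ hϑ
    rwa [hsb.deriv, heb.deriv] at this
  have hA : HasDerivAt (fun y : ℝ => l^2*y) (l^2*1) ϑ := (hasDerivAt_id ϑ).const_mul (l^2)
  have hS' : HasDerivAt (fun y => s (l^3*ϱ) (l^2*y)) (0*sa' + (l^2*1)*sb') ϑ :=
    hsc' 0 (l^2*1) (fun _ => l^3*ϱ) (fun y => l^2*y) ϑ (hasDerivAt_const ϑ _) hA rfl rfl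
  have hE' : HasDerivAt (fun y => e (l^3*ϱ) (l^2*y)) (0*ea' + (l^2*1)*eb') ϑ :=
    hec' 0 (l^2*1) (fun _ => l^3*ϱ) (fun y => l^2*y) ϑ (hasDerivAt_const ϑ _) hA rfl rfl
  have hG : HasDerivAt
      (fun y => l^2*y * s (l^3*ϱ) (l^2*y) - e (l^3*ϱ) (l^2*y) - l^2*(y * s ϱ y - e ϱ y))
      ((l^2*1) * s (l^3*ϱ) (l^2*ϑ) + (l^2*ϑ) * (0*sa' + (l^2*1)*sb')
        - (0*ea' + (l^2*1)*eb') - l^2*((1 * s ϱ ϑ + ϑ * sb) - eb)) ϑ :=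
    ((hA.mul hS').sub hE').sub ((((hasDerivAt_id ϑ).mul hsb).sub heb).const_mul (l^2))
  have hEv : (fun y => l^2*y * s (l^3*ϱ) (l^2*y) - e (l^3*ϱ) (l^2*y) - l^2*(y * s ϱ y - e ϱ y))
      =ᶠ[nhds ϑ] fun _ => (0:ℝ) := by
    filter_upwards [isOpen_Ioi.mem_nhds hϑ] with y hy
    have := star ϱ y l hϱ hy hl
    linarith [this]
  have hzero : HasDerivAt
      (fun y => l^2*y * s (l^3*ϱ) (l^2*y) - e (l^3*ϱ) (l^2*y) - l^2*(y * s ϱ y - e ϱ y))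
      0 ϑ := (hasDerivAt_const ϑ (0:ℝ)).congr_of_eventuallyEq hEv
  have hD0 := hG.unique hzero
  have hls : l^2 * s (l^3*ϱ) (l^2*ϑ) = l^2 * s ϱ ϑ := by
    linear_combination hD0 - l^2*g2' + l^2*g2
  have hSs : s (l^3*ϱ) (l^2*ϑ) = s ϱ ϑ :=
    mul_left_cancel₀ (show (l:ℝ)^2 ≠ 0 by positivity) hls
  have hstar := star ϱ ϑ l hϱ hϑ hl
  rw [hSs] at hstar
  linarith [hstar]

/-- Gibbs' equation together with the monoatomic relation `p = (2/3)ϱe`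
forces, locally, the structural form `p(ϱ,ϑ) = ϑ^{5/2} P(ϱ/ϑ^{3/2})`,
`e(ϱ,ϑ) = (3/2)(ϑ^{5/2}/ϱ) P(ϱ/ϑ^{3/2})` for a single C¹ function `P`. -/
theorem monoatomic_structural_form
    (p e s : ℝ → ℝ → ℝ)
    (hp : ContDiffOn ℝ 1 (fun q : ℝ × ℝ => p q.1 q.2) (Set.Ioi 0 ×ˢ Set.Ioi 0))
    (he : ContDiffOn ℝ 1 (fun q : ℝ × ℝ => e q.1 q.2) (Set.Ioi 0 ×ˢ Set.Ioi 0))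
    (hs : ContDiffOn ℝ 1 (fun q : ℝ × ℝ => s q.1 q.2) (Set.Ioi 0 ×ˢ Set.Ioi 0))
    (hGibbs1 : ∀ ϱ ϑ : ℝ, 0 < ϱ → 0 < ϑ →
      ϑ * deriv (fun x => s x ϑ) ϱ = deriv (fun x => e x ϑ) ϱ - p ϱ ϑ / ϱ ^ 2)
    (hGibbs2 : ∀ ϱ ϑ : ℝ, 0 < ϱ → 0 < ϑ →
      ϑ * deriv (fun y => s ϱ y) ϑ = deriv (fun y => e ϱ y) ϑ)
    (hmono : ∀ ϱ ϑ : ℝ, 0 < ϱ → 0 < ϑ → p ϱ ϑ = (2/3) * ϱ * e ϱ ϑ) :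
    ∀ ϱ₀ ϑ₀ : ℝ, 0 < ϱ₀ → 0 < ϑ₀ →
      ∃ (P : ℝ → ℝ) (U : Set (ℝ × ℝ)), ContDiff ℝ 1 P ∧ IsOpen U ∧
        (ϱ₀, ϑ₀) ∈ U ∧ U ⊆ Set.Ioi 0 ×ˢ Set.Ioi 0 ∧
        ∀ ϱ ϑ : ℝ, (ϱ, ϑ) ∈ U →
          p ϱ ϑ = ϑ ^ ((5:ℝ)/2) * P (ϱ / ϑ ^ ((3:ℝ)/2)) ∧
          e ϱ ϑ = (3/2) * (ϑ ^ ((5:ℝ)/2) / ϱ) * P (ϱ / ϑ ^ ((3:ℝ)/2)) := by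
  have hscale := scale_lemma p e s he hs hGibbs1 hGibbs2 hmono
  -- scaling law  e(ϱ,ϑ) = ϑ · e(ϱ/ϑ^{3/2}, 1)
  have eScale : ∀ ϱ ϑ : ℝ, 0 < ϱ → 0 < ϑ →
      e ϱ ϑ = ϑ * e (ϱ / ϑ ^ ((3:ℝ)/2)) 1 := by
    intro ϱ ϑ hϱ hϑ
    set l := Real.sqrt ϑ with hldef
    have hl : 0 < l := Real.sqrt_pos.2 hϑ
    have hT : (0:ℝ) < ϑ ^ ((3:ℝ)/2) := Real.rpow_pos_of_pos hϑ _
    have hZ : 0 < ϱ / ϑ ^ ((3:ℝ)/2) := div_pos hϱ hT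
    have hrw : l ^ 3 = ϑ ^ ((3:ℝ)/2) := by
      rw [hldef, Real.sqrt_eq_rpow, ← Real.rpow_natCast (ϑ ^ ((1:ℝ)/2)) 3,
        ← Real.rpow_mul hϑ.le]
      norm_num
    have h1 : l ^ 3 * (ϱ / ϑ ^ ((3:ℝ)/2)) = ϱ := by
      rw [hrw]; field_simp
    have h2 : l ^ 2 * (1:ℝ) = ϑ := by
      rw [mul_one, hldef, Real.sq_sqrt hϑ.le]
    have := hscale (ϱ / ϑ ^ ((3:ℝ)/2)) 1 l hZ one_pos hl
    rw [h1, h2] at this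
    rw [this, ← h2]; ring
  intro ϱ₀ ϑ₀ hϱ₀ hϑ₀
  set Z₀ : ℝ := ϱ₀ / ϑ₀ ^ ((3:ℝ)/2) with hZ₀def
  have hZ₀ : 0 < Z₀ := div_pos hϱ₀ (Real.rpow_pos_of_pos hϑ₀ _)
  -- smooth truncation φ : ℝ → (0,∞), φ = id on [Z₀/2, 3Z₀/2]
  set ψ : ContDiffBump Z₀ := ⟨Z₀/2, 3*Z₀/4, by positivity, by linarith⟩ with hψdef
  set φ : ℝ → ℝ := fun x => Z₀/8 + (x - Z₀/8) * ψ x with hφdef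
  have hφ : ContDiff ℝ 1 φ :=
    contDiff_const.add ((contDiff_id.sub contDiff_const).mul ψ.contDiff)
  have hφpos : ∀ x, 0 < φ x := by
    intro x
    rcases eq_or_ne (ψ x) 0 with h0 | h0
    · simp only [hφdef, h0, mul_zero, add_zero]; positivity
    · have hx : x ∈ Metric.ball Z₀ (3*Z₀/4) := by
        rw [← ψ.support_eq]; exact Function.mem_support.2 h0
      rw [Metric.mem_ball, Real.dist_eq, abs_lt] at hx
      have h1 : Z₀/8 < x := by linarith [hx.1]
      have h2 : 0 ≤ (x - Z₀/8) * ψ x := mul_nonneg (by linarith) ψ.nonneg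
      simp only [hφdef]; positivity
  have hφid : ∀ x, Z₀/2 ≤ x → x ≤ 3*Z₀/2 → φ x = x := by
    intro x h1 h2
    have : ψ x = 1 := by
      apply ψ.one_of_mem_closedBall
      have hrIn : ψ.rIn = Z₀/2 := rfl
      rw [Metric.mem_closedBall, Real.dist_eq, abs_le, hrIn]
      constructor <;> linarith
    simp only [hφdef, this, mul_one]; ring
  -- e(·, 1) is C¹ on (0,∞)
  have he1 : ContDiffOn ℝ 1 (fun x => e x 1) (Ioi 0) := by
    have := he.comp ((contDiff_id.prodMk contDiff_const).contDiffOn :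
        ContDiffOn ℝ 1 (fun x : ℝ => ((x, (1:ℝ)) : ℝ × ℝ)) (Ioi 0))
      (fun x hx => ⟨hx, Set.mem_Ioi.mpr one_pos⟩)
    simpa [Function.comp_def] using this
  set P : ℝ → ℝ := fun x => (2/3) * φ x * e (φ x) 1 with hPdef
  have hP : ContDiff ℝ 1 P := by
    have hcomp : ContDiff ℝ 1 ((fun x => e x 1) ∘ φ) :=
      he1.comp_contDiff hφ (fun x => hφpos x)
    exact (contDiff_const.mul hφ).mul hcomp
  set U : Set (ℝ × ℝ) := (Ioi 0 ×ˢ Ioi 0) ∩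
      ((fun q : ℝ × ℝ => q.1 / q.2 ^ ((3:ℝ)/2)) ⁻¹' Ioo (Z₀/2) (3*Z₀/2)) with hUdef
  have hUopen : IsOpen U := by
    apply ContinuousOn.isOpen_inter_preimage _ (isOpen_Ioi.prod isOpen_Ioi) isOpen_Ioo
    apply ContinuousOn.div continuous_fst.continuousOn
    · exact continuous_snd.continuousOn.rpow_const (fun q hq => Or.inl (ne_of_gt hq.2))
    · exact fun q hq => ne_of_gt (Real.rpow_pos_of_pos hq.2 _)
  refine ⟨P, U, hP, hUopen, ⟨⟨hϱ₀, hϑ₀⟩, ?_, ?_⟩, inter_subset_left, ?_⟩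
  · show Z₀/2 < Z₀; linarith
  · show Z₀ < 3*Z₀/2; linarith
  intro ϱ ϑ hq
  obtain ⟨⟨hϱ, hϑ⟩, hZmem⟩ := hq
  simp only [mem_preimage, mem_Ioo] at hZmem
  have hϱ' : (0:ℝ) < ϱ := hϱ
  have hϑ' : (0:ℝ) < ϑ := hϑ
  set Z : ℝ := ϱ / ϑ ^ ((3:ℝ)/2) with hZdef
  have hφZ : φ Z = Z := hφid Z hZmem.1.le hZmem.2.le
  have hPZ : P Z = (2/3) * Z * e Z 1 := by rw [hPdef]; simp only [hφZ]
  have hE := eScale ϱ ϑ hϱ' hϑ'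
  have hT : (0:ℝ) < ϑ ^ ((3:ℝ)/2) := Real.rpow_pos_of_pos hϑ' _
  have h52 : ϑ ^ ((5:ℝ)/2) = ϑ ^ ((3:ℝ)/2) * ϑ := by
    rw [show ((5:ℝ)/2) = (3:ℝ)/2 + 1 by norm_num, Real.rpow_add hϑ', Real.rpow_one]
  have heq : e ϱ ϑ = (3/2) * (ϑ ^ ((5:ℝ)/2) / ϱ) * P Z := by
    rw [hPZ, h52, hE, hZdef]
    field_simp
  refine ⟨?_, heq⟩
  rw [hmono ϱ ϑ hϱ' hϑ', heq, h52]
  field_simp
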